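/- (Proposition, worst-case latent distribution bound.) Let Q and P_1,…,P_K be distributions over X, φ_1,…,φ_K nonnegative coefficients summing to 1, and O a set of distributions such that every S ∈ O satisfies d_{HΔH}(Σ_i φ_i P_i, S) ≤ max_{i,j} d_{HΔH}(P_i, P_j). Then for any h ∈ H, ε_Q(h) ≤ λ' + Σ_i φ_i ε_{P_i}(h) + (1/2) inf_{S∈O} d_{HΔH}(S, Q) + (1/2) max_{i,j} d_{HΔH}(P_i, P_j), where λ' is the sum of the ideal-joint-hypothesis errors arising in the two applications of the domain adaptation bound. -/

import Mathlib

open MeasureTheory Finset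

variable {X : Type*}

/-- Interpret a Boolean hypothesis value as a real number in {0,1}. -/
noncomputable def b2r (b : Bool) : ℝ := if b then 1 else 0

/-- The H-divergence: d_H(P,Q) = 2 · sup_{h∈H} |P({h=1}) − Q({h=1})|. -/
noncomputable def dH [MeasurableSpace X] (H : Set (X → Bool)) (P Q : Measure X) : ℝ :=
  2 * ⨆ h : H, |(P {x | (h : X → Bool) x = true}).toReal -
    (Q {x | (h : X → Bool) x = true}).toReal|

/-- The error ε_P(h) = E_{x∼P} |h(x) − h*(x)|. -/
noncomputable def err [MeasurableSpace X] (P : Measure X) (h hstar : X → Bool) : ℝ :=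
  ∫ x, |b2r (h x) - b2r (hstar x)| ∂P

/-- The symmetric difference hypothesis class HΔH. -/
def sdClass (H : Set (X → Bool)) : Set (X → Bool) :=
  {g | ∃ h ∈ H, ∃ h' ∈ H, g = fun x => xor (h x) (h' x)}

lemma dH_symm [MeasurableSpace X] (H : Set (X → Bool)) (P Q : Measure X) :
    dH H P Q = dH H Q P := by
  unfold dH
  congr 1
  exact iSup_congr fun g => abs_sub_comm _ _

lemma xor_set_meas [MeasurableSpace X] {h h' : X → Bool} (mh : Measurable h)
    (mh' : Measurable h') : MeasurableSet {x | xor (h x) (h' x) = true} := by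
  have : {x | xor (h x) (h' x) = true} =
      (h ⁻¹' {true} ∩ h' ⁻¹' {false}) ∪ (h ⁻¹' {false} ∩ h' ⁻¹' {true}) := by
    ext x; cases hx : h x <;> cases hx' : h' x <;> simp [hx, hx']
  rw [this]
  exact ((mh (measurableSet_singleton _)).inter (mh' (measurableSet_singleton _))).union
    ((mh (measurableSet_singleton _)).inter (mh' (measurableSet_singleton _)))

lemma err_eq [MeasurableSpace X] (P : Measure X) {h h' : X → Bool} (mh : Measurable h)
    (mh' : Measurable h') :
    err P h h' = (P {x | xor (h x) (h' x) = true}).toReal := by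
  have hpt : ∀ x, |b2r (h x) - b2r (h' x)| =
      Set.indicator {x | xor (h x) (h' x) = true} (fun _ => (1:ℝ)) x := by
    intro x
    cases hx : h x <;> cases hx' : h' x <;>
      simp [b2r, hx, hx', Set.indicator, Set.mem_setOf_eq]
  rw [err]
  simp only [hpt]
  rw [integral_indicator_const _ (xor_set_meas mh mh')]
  simp
  rfl

lemma mix_apply [MeasurableSpace X] {K : ℕ} (P : Fin K → Measure X)
    [∀ i, IsProbabilityMeasure (P i)] (φ : Fin K → ℝ) (hφ : ∀ i, 0 ≤ φ i) (A : Set X) :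
    ((∑ i, ENNReal.ofReal (φ i) • P i) A).toReal = ∑ i, φ i * (P i A).toReal := by
  rw [Measure.finset_sum_apply]
  rw [ENNReal.toReal_sum (fun i _ => by
    simp only [Measure.smul_apply, smul_eq_mul]
    exact ENNReal.mul_ne_top ENNReal.ofReal_ne_top (measure_ne_top _ _))]
  refine Finset.sum_congr rfl fun i _ => ?_
  simp only [Measure.smul_apply, smul_eq_mul]
  rw [ENNReal.toReal_mul, ENNReal.toReal_ofReal (hφ i)]

lemma mix_prob [MeasurableSpace X] {K : ℕ} (P : Fin K → Measure X)
    [∀ i, IsProbabilityMeasure (P i)] (φ : Fin K → ℝ) (hφ : ∀ i, 0 ≤ φ i)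
    (hsum : ∑ i, φ i = 1) :
    IsProbabilityMeasure (∑ i, ENNReal.ofReal (φ i) • P i) := by
  constructor
  rw [Measure.finset_sum_apply]
  simp only [Measure.smul_apply, smul_eq_mul, measure_univ, mul_one]
  rw [← ENNReal.ofReal_sum_of_nonneg (fun i _ => hφ i), hsum, ENNReal.ofReal_one]

theorem worst_case_bound [MeasurableSpace X] (H : Finset (X → Bool)) (hne : H.Nonempty)
    (hm : ∀ h ∈ H, Measurable h) (hstar : X → Bool) (hms : Measurable hstar)
    {K : ℕ} [NeZero K] (P : Fin K → Measure X) [∀ i, IsProbabilityMeasure (P i)]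
    (φ : Fin K → ℝ) (hφ : ∀ i, 0 ≤ φ i) (hsum : ∑ i, φ i = 1)
    (Q : Measure X) [IsProbabilityMeasure Q]
    (O : Set (Measure X)) (hO : O.Nonempty) (hOp : ∀ S ∈ O, IsProbabilityMeasure S)
    (hOd : ∀ S ∈ O, dH (sdClass ↑H) (∑ i, ENNReal.ofReal (φ i) • P i) S ≤
      Finset.univ.sup' Finset.univ_nonempty fun i =>
        Finset.univ.sup' Finset.univ_nonempty fun j => dH (sdClass ↑H) (P i) (P j))
    (lam : Measure X → Measure X → ℝ)
    (hlam : ∀ P' Q' : Measure X,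
      lam P' Q' = H.inf' hne fun h' => err P' h' hstar + err Q' h' hstar)
    (DA : ∀ P' Q' : Measure X, IsProbabilityMeasure P' → IsProbabilityMeasure Q' →
      ∀ h ∈ H, err Q' h hstar ≤
        lam P' Q' + err P' h hstar + (1 / 2) * dH (sdClass ↑H) Q' P')
    (lam' : ℝ)
    (hlam' : ∀ S ∈ O, lam (∑ i, ENNReal.ofReal (φ i) • P i) S + lam S Q ≤ lam')
    (h : X → Bool) (hh : h ∈ H) :
    err Q h hstar ≤ lam' + (∑ i, φ i * err (P i) h hstar)
      + (1 / 2) * (⨅ S : O, dH (sdClass ↑H) (S : Measure X) Q)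
      + (1 / 2) * (Finset.univ.sup' Finset.univ_nonempty fun i =>
          Finset.univ.sup' Finset.univ_nonempty fun j =>
            dH (sdClass ↑H) (P i) (P j)) := by
  haveI : Nonempty ↥O := hO.to_subtype
  set Pm := ∑ i, ENNReal.ofReal (φ i) • P i with hPmdef
  haveI hPm : IsProbabilityMeasure Pm := mix_prob P φ hφ hsum
  set maxd := Finset.univ.sup' Finset.univ_nonempty fun i =>
      Finset.univ.sup' Finset.univ_nonempty fun j => dH (sdClass ↑H) (P i) (P j) with hmaxd
  have herrPm : err Pm h hstar = ∑ i, φ i * err (P i) h hstar := by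
    rw [err_eq Pm (hm h hh) hms, hPmdef, mix_apply P φ hφ]
    exact Finset.sum_congr rfl fun i _ => by rw [err_eq (P i) (hm h hh) hms]
  have key : ∀ S ∈ O, err Q h hstar
      ≤ lam' + (∑ i, φ i * err (P i) h hstar) + (1 / 2) * dH (sdClass ↑H) S Q
        + (1 / 2) * maxd := by
    intro S hS
    haveI hSp := hOp S hS
    have h1 := DA S Q hSp inferInstance h hh
    have h2 := DA Pm S hPm hSp h hh
    have hsym1 : dH (sdClass ↑H) Q S = dH (sdClass ↑H) S Q := dH_symm _ _ _
    have hsym2 : dH (sdClass ↑H) S Pm = dH (sdClass ↑H) Pm S := dH_symm _ _ _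
    have hd := hOd S hS
    have hl := hlam' S hS
    rw [herrPm] at h2
    linarith
  have hinf : err Q h hstar - (lam' + (∑ i, φ i * err (P i) h hstar) + (1 / 2) * maxd)
      ≤ (1 / 2) * (⨅ S : O, dH (sdClass ↑H) (S : Measure X) Q) := by
    have h2le : 2 * (err Q h hstar
        - (lam' + (∑ i, φ i * err (P i) h hstar) + (1 / 2) * maxd))
        ≤ ⨅ S : O, dH (sdClass ↑H) (S : Measure X) Q := by
      refine le_ciInf fun S => ?_
      have := key S.1 S.2
      linarith
    linarith
  linarith
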